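/- For any coalgebra C over a field k, the subspace I₁(C) is a coideal of C: the counit ε vanishes on I₁(C), and Δ(I₁(C)) ⊆ I₁(C) ⊗ C + C ⊗ I₁(C). (Hence the quotient C^[1] = C/I₁(C) carries a unique coalgebra structure making the projection C → C^[1] a coalgebra morphism.) -/
import Mathlib


open TensorProduct

/-- `I₁(C)`: the subspace of a coalgebra `C` spanned by the elements
`φ(x₁)·x₂ − φ(x₂)·x₁` for `x ∈ C` and linear forms `φ : C → k`. -/
noncomputable def lazySubspace (k : Type*) [Field k] (C : Type*)
    [AddCommGroup C] [Module k C] [Coalgebra k C] : Submodule k C :=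
  Submodule.span k {y : C | ∃ (x : C) (φ : C →ₗ[k] k),
    y = (TensorProduct.lid k C)
          (TensorProduct.map φ LinearMap.id (Coalgebra.comul x))
      - (TensorProduct.rid k C)
          (TensorProduct.map LinearMap.id φ (Coalgebra.comul x))}

section Aux

variable {k : Type*} [Field k] {C : Type*} [AddCommGroup C] [Module k C] [Coalgebra k C]

open Coalgebra LinearMap

/-- `φ` applied to the left tensor factor. -/
noncomputable def lazyL (φ : C →ₗ[k] k) (M : Type*) [AddCommGroup M] [Module k M] :
    C ⊗[k] M →ₗ[k] M :=
  (TensorProduct.lid k M).toLinearMap ∘ₗ φ.rTensor M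

/-- `φ` applied to the right tensor factor. -/
noncomputable def lazyR (φ : C →ₗ[k] k) (M : Type*) [AddCommGroup M] [Module k M] :
    M ⊗[k] C →ₗ[k] M :=
  (TensorProduct.rid k M).toLinearMap ∘ₗ φ.lTensor M

@[simp] lemma lazyL_tmul (φ : C →ₗ[k] k) {M : Type*} [AddCommGroup M] [Module k M]
    (a : C) (m : M) : lazyL φ M (a ⊗ₜ[k] m) = φ a • m := by
  simp [lazyL]

@[simp] lemma lazyR_tmul (φ : C →ₗ[k] k) {M : Type*} [AddCommGroup M] [Module k M]
    (m : M) (a : C) : lazyR φ M (m ⊗ₜ[k] a) = φ a • m := by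
  simp [lazyR]

/-- The map `x ↦ φ(x₁)x₂ − φ(x₂)x₁`. -/
noncomputable def lazyTheta (φ : C →ₗ[k] k) : C →ₗ[k] C :=
  (lazyL φ C - lazyR φ C) ∘ₗ comul

lemma lazyTheta_mem (φ : C →ₗ[k] k) (x : C) : lazyTheta φ x ∈ lazySubspace k C := by
  refine Submodule.subset_span ⟨x, φ, ?_⟩
  simp [lazyTheta, lazyL, lazyR, LinearMap.rTensor, LinearMap.lTensor]

lemma comul_comp_lazyL (φ : C →ₗ[k] k) :
    comul (R := k) ∘ₗ lazyL φ C = lazyL φ (C ⊗[k] C) ∘ₗ (comul (R := k)).lTensor C := by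
  ext a b; simp

lemma comul_comp_lazyR (φ : C →ₗ[k] k) :
    comul (R := k) ∘ₗ lazyR φ C = lazyR φ (C ⊗[k] C) ∘ₗ (comul (R := k)).rTensor C := by
  ext a b; simp

lemma lazyL_comp_assoc (φ : C →ₗ[k] k) :
    lazyL φ (C ⊗[k] C) ∘ₗ (TensorProduct.assoc k C C C).toLinearMap
      = (lazyL φ C).rTensor C := by
  ext a b c; simp [smul_tmul']

lemma lazyR_comp_assoc_symm (φ : C →ₗ[k] k) :
    lazyR φ (C ⊗[k] C) ∘ₗ (TensorProduct.assoc k C C C).symm.toLinearMap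
      = (lazyR φ C).lTensor C := by
  ext a b c; simp [tmul_smul]

lemma lazy_cross (φ : C →ₗ[k] k) :
    (lazyR φ C).rTensor C ∘ₗ (TensorProduct.assoc k C C C).symm.toLinearMap
      = (lazyL φ C).lTensor C := by
  ext a b c; simp [smul_tmul', tmul_smul]

lemma comul_lazyTheta (φ : C →ₗ[k] k) (x : C) :
    comul (R := k) (lazyTheta φ x)
      = (lazyTheta φ).rTensor C (comul x) + (lazyTheta φ).lTensor C (comul x) := by
  have hL : comul (R := k) (lazyL φ C (comul x))
      = (lazyL φ C).rTensor C ((comul (R := k)).rTensor C (comul x)) := by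
    have h1 := LinearMap.congr_fun (comul_comp_lazyL φ) (comul (R := k) x)
    have h2 := LinearMap.congr_fun (lazyL_comp_assoc φ)
      ((comul (R := k)).rTensor C (comul x))
    simp only [LinearMap.comp_apply, LinearEquiv.coe_coe] at h1 h2
    rw [h1, ← Coalgebra.coassoc_apply, h2]
  have hR : comul (R := k) (lazyR φ C (comul x))
      = (lazyR φ C).lTensor C ((comul (R := k)).lTensor C (comul x)) := by
    have h1 := LinearMap.congr_fun (comul_comp_lazyR φ) (comul (R := k) x)
    have h2 := LinearMap.congr_fun (lazyR_comp_assoc_symm φ)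
      ((comul (R := k)).lTensor C (comul x))
    simp only [LinearMap.comp_apply, LinearEquiv.coe_coe] at h1 h2
    rw [h1, ← Coalgebra.coassoc_symm_apply, h2]
  have hX : (lazyR φ C).rTensor C ((comul (R := k)).rTensor C (comul x))
      = (lazyL φ C).lTensor C ((comul (R := k)).lTensor C (comul x)) := by
    have h2 := LinearMap.congr_fun (lazy_cross φ)
      ((comul (R := k)).lTensor C (comul x))
    simp only [LinearMap.comp_apply, LinearEquiv.coe_coe] at h2
    rw [← Coalgebra.coassoc_symm_apply, h2]
  have hthetaL : lazyTheta φ x = lazyL φ C (comul x) - lazyR φ C (comul x) := by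
    simp [lazyTheta]
  have hrT : (lazyTheta φ).rTensor C (comul (R := k) x)
      = (lazyL φ C).rTensor C ((comul (R := k)).rTensor C (comul x))
        - (lazyR φ C).rTensor C ((comul (R := k)).rTensor C (comul x)) := by
    rw [lazyTheta, LinearMap.sub_comp, LinearMap.rTensor_sub, LinearMap.rTensor_comp,
      LinearMap.rTensor_comp]
    simp
  have hlT : (lazyTheta φ).lTensor C (comul (R := k) x)
      = (lazyL φ C).lTensor C ((comul (R := k)).lTensor C (comul x))
        - (lazyR φ C).lTensor C ((comul (R := k)).lTensor C (comul x)) := by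
    rw [lazyTheta, LinearMap.sub_comp, LinearMap.lTensor_sub, LinearMap.lTensor_comp,
      LinearMap.lTensor_comp]
    simp
  rw [hthetaL, map_sub, hL, hR, hrT, hlT, hX]
  abel

lemma counit_lazyTheta (φ : C →ₗ[k] k) (x : C) :
    Coalgebra.counit (R := k) (lazyTheta φ x) = 0 := by
  have hthetaL : lazyTheta φ x = lazyL φ C (comul x) - lazyR φ C (comul x) := by
    simp [lazyTheta]
  have hL : Coalgebra.counit (R := k) (lazyL φ C (comul (R := k) x)) = φ x := by
    have h : Coalgebra.counit (R := k) ∘ₗ lazyL φ C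
        = φ ∘ₗ (TensorProduct.rid k C).toLinearMap ∘ₗ (Coalgebra.counit (R := k)).lTensor C := by
      ext a b; simp [mul_comm]
    have := LinearMap.congr_fun h (comul (R := k) x)
    simp only [LinearMap.comp_apply, LinearEquiv.coe_coe] at this
    rw [this, Coalgebra.lTensor_counit_comul]
    simp
  have hR : Coalgebra.counit (R := k) (lazyR φ C (comul (R := k) x)) = φ x := by
    have h : Coalgebra.counit (R := k) ∘ₗ lazyR φ C
        = φ ∘ₗ (TensorProduct.lid k C).toLinearMap ∘ₗ (Coalgebra.counit (R := k)).rTensor C := by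
      ext a b; simp [mul_comm]
    have := LinearMap.congr_fun h (comul (R := k) x)
    simp only [LinearMap.comp_apply, LinearEquiv.coe_coe] at this
    rw [this, Coalgebra.rTensor_counit_comul]
    simp
  rw [hthetaL, map_sub, hL, hR, sub_self]

end Aux

/-- For any coalgebra `C` over a field `k`, the subspace `I₁(C)`
is a coideal: the counit vanishes on it, and
`Δ(I₁(C)) ⊆ I₁(C) ⊗ C + C ⊗ I₁(C)`. -/
theorem lazySubspace_isCoideal (k : Type*) [Field k] (C : Type*)
    [AddCommGroup C] [Module k C] [Coalgebra k C] :
    ∀ y ∈ lazySubspace k C,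
      Coalgebra.counit (R := k) y = 0 ∧
      Coalgebra.comul (R := k) y ∈
        LinearMap.range (TensorProduct.map (lazySubspace k C).subtype
          (LinearMap.id : C →ₗ[k] C)) ⊔
        LinearMap.range (TensorProduct.map (LinearMap.id : C →ₗ[k] C)
          (lazySubspace k C).subtype) := by
  intro y hy
  induction hy using Submodule.span_induction with
  | mem y hy =>
    obtain ⟨x, φ, rfl⟩ := hy
    have hy' : (TensorProduct.lid k C)
          (TensorProduct.map φ LinearMap.id (Coalgebra.comul x))
      - (TensorProduct.rid k C)
          (TensorProduct.map LinearMap.id φ (Coalgebra.comul x)) = lazyTheta φ x := by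
      simp [lazyTheta, lazyL, lazyR, LinearMap.rTensor, LinearMap.lTensor]
    rw [hy']
    refine ⟨counit_lazyTheta φ x, ?_⟩
    rw [comul_lazyTheta φ x]
    have hfac : lazyTheta φ = (lazySubspace k C).subtype ∘ₗ
        (lazyTheta φ).codRestrict (lazySubspace k C) (lazyTheta_mem φ) := rfl
    refine Submodule.add_mem _ (Submodule.mem_sup_left ?_) (Submodule.mem_sup_right ?_)
    · refine ⟨((lazyTheta φ).codRestrict (lazySubspace k C)
        (lazyTheta_mem φ)).rTensor C (Coalgebra.comul x), ?_⟩
      rw [show TensorProduct.map (lazySubspace k C).subtype (LinearMap.id : C →ₗ[k] C)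
        = ((lazySubspace k C).subtype).rTensor C from rfl, ← LinearMap.comp_apply,
        ← LinearMap.rTensor_comp, ← hfac]
    · refine ⟨((lazyTheta φ).codRestrict (lazySubspace k C)
        (lazyTheta_mem φ)).lTensor C (Coalgebra.comul x), ?_⟩
      rw [show TensorProduct.map (LinearMap.id : C →ₗ[k] C) (lazySubspace k C).subtype
        = ((lazySubspace k C).subtype).lTensor C from rfl, ← LinearMap.comp_apply,
        ← LinearMap.lTensor_comp, ← hfac]
  | zero => simp
  | add a b _ _ ha hb =>
    exact ⟨by rw [map_add, ha.1, hb.1, add_zero],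
      by rw [map_add]; exact Submodule.add_mem _ ha.2 hb.2⟩
  | smul c a _ ha =>
    exact ⟨by rw [map_smul, ha.1, smul_zero],
      by rw [map_smul]; exact Submodule.smul_mem _ c ha.2⟩
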